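/- Quantum logical contextuality of the Hardy model: let ψ₀ = (e₀⊗e₀ + e₁⊗e₀ + e₁⊗e₁)/√3 in EuclideanSpace ℂ (Fin 2 × Fin 2), and let vZ(a) = e_a and vX(a) = (e₀ + (−1)^a e₁)/√2 for a ∈ {0,1}. Then ⟪vX(1)⊗vX(1), ψ₀⟫ ≠ 0, yet for every a, b ∈ {0,1} at least one of the three inner products ⟪vZ(a)⊗vZ(b), ψ₀⟫, ⟪vZ(a)⊗vX(1), ψ₀⟫, ⟪vX(1)⊗vZ(b), ψ₀⟫ is zero. That is, the possible joint X-outcome (1,1) cannot be extended by any Z-outcome assignment (a,b) without producing a zero-probability event in some measurement context. -/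

import Mathlib

open scoped InnerProductSpace

noncomputable section

/-- Standard basis vectors `e₀, e₁` of `ℂ²`. -/
def e (a : Fin 2) : EuclideanSpace ℂ (Fin 2) := EuclideanSpace.single a 1

/-- Twofold product vector: `(φ⊗χ)(j,k) = φ(j)·χ(k)`. -/
def tp2 (φ χ : EuclideanSpace ℂ (Fin 2)) :
    EuclideanSpace ℂ (Fin 2 × Fin 2) :=
  WithLp.toLp 2 (fun p => φ p.1 * χ p.2)

/-- The Hardy state `ψ₀ = (e₀⊗e₀ + e₁⊗e₀ + e₁⊗e₁)/√3`. -/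
def ψ₀ : EuclideanSpace ℂ (Fin 2 × Fin 2) :=
  (Real.sqrt 3 : ℂ)⁻¹ • (tp2 (e 0) (e 0) + tp2 (e 1) (e 0) + tp2 (e 1) (e 1))

/-- Z-basis (computational basis) vectors `vZ(a) = e_a`. -/
def vZ (a : Fin 2) : EuclideanSpace ℂ (Fin 2) := e a

/-- X-basis vectors `vX(a) = (e₀ + (−1)^a e₁)/√2`. -/
def vX (a : Fin 2) : EuclideanSpace ℂ (Fin 2) :=
  (Real.sqrt 2 : ℂ)⁻¹ • (e 0 + ((-1 : ℂ) ^ (a : ℕ)) • e 1)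

/-- Quantum logical contextuality of the Hardy model: the joint X-outcome
`(1,1)` is possible, yet it cannot be extended by any Z-outcome assignment
`(a,b)` without producing a zero-probability event in some context. -/
theorem hardy_logical_contextuality :
    ⟪tp2 (vX 1) (vX 1), ψ₀⟫_ℂ ≠ 0 ∧
    ∀ a b : Fin 2,
      ⟪tp2 (vZ a) (vZ b), ψ₀⟫_ℂ = 0 ∨
      ⟪tp2 (vZ a) (vX 1), ψ₀⟫_ℂ = 0 ∨
      ⟪tp2 (vX 1) (vZ b), ψ₀⟫_ℂ = 0 := by
  constructor
  · simp only [PiLp.inner_apply, Fintype.sum_prod_type, Fin.sum_univ_two,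
      ψ₀, tp2, vX, vZ, e, PiLp.smul_apply, PiLp.add_apply,
      EuclideanSpace.single_apply, smul_eq_mul]
    norm_num
  · intro a b
    fin_cases a <;> fin_cases b <;>
    simp only [PiLp.inner_apply, Fintype.sum_prod_type, Fin.sum_univ_two,
      ψ₀, tp2, vX, vZ, e, PiLp.smul_apply, PiLp.add_apply,
      EuclideanSpace.single_apply, smul_eq_mul] <;>
    norm_num
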